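/- Let (V, φ, α_1,…,α_{n−1}) be an n-Hom-Nambu-Lie algebra, τ a φ-trace, and α_n : V → V linear such that the compatibility conditions τ(α_i(x))τ(y) = τ(x)τ(α_i(y)) and τ(α_i(x))α_j(y) = τ(α_j(y))α_i(x) hold for all i,j ∈ {1,…,n}. If a ∈ V satisfies α_n(a) = a, then (V, π_a(φ_τ), α_1,…,α_{n−1}) is an n-Hom-Nambu-Lie algebra, with (π_a φ_τ)(x_1,…,x_n) = Σ_{k=1}^n (−1)^k τ(x_k) φ(x_1,…,x̂_k,…,x_n, a) + (−1)^{n+1} τ(a) φ(x_1,…,x_n). -/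

import Mathlib

set_option linter.unusedSectionVars false
set_option maxHeartbeats 1000000

variable {K V : Type*} [Field K] [CharZero K] [AddCommGroup V] [Module K V]

/-- The `τ`-extension of an `m`-ary map `f` to an `(m+1)`-ary map:
`φ_τ(x_1,…,x_{m+1}) = Σ_{k=1}^{m+1} (−1)^k τ(x_k) φ(x_1,…,x̂_k,…,x_{m+1})`. -/
def insTau (m : ℕ) (τ : V →ₗ[K] K) (f : (Fin m → V) → V) :
    (Fin (m + 1) → V) → V :=
  fun x => ∑ k : Fin (m + 1), (-1 : K) ^ (k.val + 1) • τ (x k) • f (x ∘ k.succAbove)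

/-- The Hom-Nambu-Jacobi identity for an `(n+1)`-ary bracket `φ` with twisting maps
`α_1,…,α_n`. -/
def HomNambuJacobi (n : ℕ) (φ : V [⋀^Fin (n + 1)]→ₗ[K] V)
    (α : Fin n → V →ₗ[K] V) : Prop :=
  ∀ (x : Fin n → V) (y : Fin (n + 1) → V),
    φ (Fin.snoc (fun i => α i (x i)) (φ y)) =
      ∑ k : Fin (n + 1), φ (fun j =>
        if h : j.val < k.val then
          α ⟨j.val, lt_of_lt_of_le h (Nat.lt_succ_iff.mp k.isLt)⟩ (y j)
        else if h' : j.val = k.val then φ (Fin.snoc x (y k))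
        else α ⟨j.val - 1, by have := j.isLt; omega⟩ (y j))

lemma unit_pow_smul (m : ℕ) (v : V) :
    ((-1 : ℤˣ) ^ m • v : V) = ((-1 : K) ^ m) • v := by
  rcases Nat.even_or_odd m with h | h
  · rw [h.neg_one_pow, h.neg_one_pow, one_smul, one_smul]
  · rw [h.neg_one_pow, h.neg_one_pow, neg_one_smul]
    simp [Units.smul_def]

lemma snoc_perm (n : ℕ) (φ : V [⋀^Fin (n + 1)]→ₗ[K] V) (x : Fin (n + 1) → V)
    (k : Fin (n + 1)) (w : V) :
    φ (Fin.snoc (x ∘ k.succAbove) w) =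
      ((-1 : K) ^ (n + k.val)) • φ (Function.update x k w) := by
  have h1 : (Fin.cons w (x ∘ k.succAbove) : Fin (n + 1) → V)
      = (Function.update x k w) ∘ ⇑(k.cycleRange).symm := by
    funext j
    refine Fin.cases ?_ ?_ j
    · simp only [Function.comp_apply, Fin.cons_zero]
      rw [Fin.cycleRange_symm_zero, Function.update_self]
    · intro m
      simp only [Function.comp_apply, Fin.cons_succ]
      rw [Fin.cycleRange_symm_succ, Function.update_of_ne  (Fin.succAbove_ne k m)]
  have h2 : (Fin.snoc (x ∘ k.succAbove) w : Fin (n + 1) → V)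
      = (Fin.cons w (x ∘ k.succAbove)) ∘ ⇑(finRotate (n + 1)) := by
    funext j
    refine Fin.lastCases ?_ ?_ j
    · simp [finRotate_last]
    · intro m
      simp [finRotate_succ_apply, Fin.coeSucc_eq_succ]
  rw [h2, AlternatingMap.map_perm, h1, AlternatingMap.map_perm]
  rw [Equiv.Perm.sign_symm, Fin.sign_cycleRange, sign_finRotate, smul_smul, ← pow_add]
  exact unit_pow_smul _ _

def psiMul (n : ℕ) (φ : V [⋀^Fin (n + 1)]→ₗ[K] V) (τ : V →ₗ[K] K) (a : V) :
    MultilinearMap K (fun _ : Fin (n + 1) => V) V :=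
  ((-1 : K) ^ (n + 1)) • (∑ k : Fin (n + 1),
      φ.toMultilinearMap.compLinearMap
        (fun i => if i = k then LinearMap.smulRight τ a else LinearMap.id)) +
    ((-1 : K) ^ n * τ a) • φ.toMultilinearMap

lemma psiMul_apply (n : ℕ) (φ : V [⋀^Fin (n + 1)]→ₗ[K] V) (τ : V →ₗ[K] K) (a : V)
    (x : Fin (n + 1) → V) :
    psiMul n φ τ a x =
      ((-1 : K) ^ (n + 1)) • (∑ k : Fin (n + 1),
          φ (Function.update x k (τ (x k) • a))) +
        ((-1 : K) ^ n * τ a) • φ x := by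
  have hfun : ∀ k : Fin (n + 1),
      (fun i => (if i = k then LinearMap.smulRight τ a else LinearMap.id) (x i))
        = Function.update x k (τ (x k) • a) := by
    intro k
    funext i
    by_cases h : i = k
    · subst h; simp
    · simp [h, Function.update_of_ne h]
  simp only [psiMul, MultilinearMap.add_apply, MultilinearMap.smul_apply,
    MultilinearMap.sum_apply, MultilinearMap.compLinearMap_apply,
    AlternatingMap.coe_multilinearMap]
  congr 2
  exact Finset.sum_congr rfl fun k _ => congrArg (⇑φ) (hfun k)

def psiAux (n : ℕ) (φ : V [⋀^Fin (n + 1)]→ₗ[K] V) (τ : V →ₗ[K] K) (a : V) :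
    V [⋀^Fin (n + 1)]→ₗ[K] V :=
  { psiMul n φ τ a with
    map_eq_zero_of_eq' := by
      intro v i j hv hij
      show psiMul n φ τ a v = 0
      rw [psiMul_apply]
      have hφv : φ v = 0 := φ.map_eq_zero_of_eq v hv hij
      have hzero : ∀ k ∈ Finset.univ, k ∉ ({i, j} : Finset (Fin (n + 1))) →
          φ (Function.update v k (τ (v k) • a)) = 0 := by
        intro k _ hk
        simp only [Finset.mem_insert, Finset.mem_singleton] at hk
        push_neg at hk
        refine φ.map_eq_zero_of_eq _ ?_ hij
        rw [Function.update_of_ne (fun h => hk.1 h.symm),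
          Function.update_of_ne (fun h => hk.2 h.symm)]
        exact hv
      have hsub : ∑ k : Fin (n + 1), φ (Function.update v k (τ (v k) • a))
          = ∑ k ∈ ({i, j} : Finset (Fin (n + 1))),
              φ (Function.update v k (τ (v k) • a)) :=
        (Finset.sum_subset (Finset.subset_univ _) hzero).symm
      have hswap : Function.update v i (τ (v i) • a) ∘ ⇑(Equiv.swap i j)
          = Function.update v j (τ (v j) • a) := by
        funext m
        rcases eq_or_ne m i with rfl | hmi
        · rw [Function.comp_apply, Equiv.swap_apply_left,
            Function.update_of_ne hij.symm, Function.update_of_ne hij, hv]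
        · rcases eq_or_ne m j with rfl | hmj
          · rw [Function.comp_apply, Equiv.swap_apply_right, Function.update_self,
              Function.update_self, hv]
          · rw [Function.comp_apply, Equiv.swap_apply_of_ne_of_ne hmi hmj,
              Function.update_of_ne hmi, Function.update_of_ne hmj]
      have hji : φ (Function.update v j (τ (v j) • a))
          = -φ (Function.update v i (τ (v i) • a)) := by
        rw [← hswap, AlternatingMap.map_swap φ _ hij]
      rw [hsub, Finset.sum_pair hij, hji, hφv]
      simp }

lemma psiAux_apply (n : ℕ) (φ : V [⋀^Fin (n + 1)]→ₗ[K] V) (τ : V →ₗ[K] K) (a : V)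
    (x : Fin (n + 1) → V) :
    psiAux n φ τ a x =
      ((-1 : K) ^ (n + 1)) • (∑ k : Fin (n + 1),
          φ (Function.update x k (τ (x k) • a))) +
        ((-1 : K) ^ n * τ a) • φ x :=
  psiMul_apply n φ τ a x

lemma tau_psiAux (n : ℕ) (φ : V [⋀^Fin (n + 1)]→ₗ[K] V) (τ : V →ₗ[K] K) (a : V)
    (htrace : ∀ x : Fin (n + 1) → V, τ (φ x) = 0) (x : Fin (n + 1) → V) :
    τ (psiAux n φ τ a x) = 0 := by
  rw [psiAux_apply]
  simp [map_sum, htrace]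

lemma psiAux_zero_A (n : ℕ) (φ : V [⋀^Fin (n + 1)]→ₗ[K] V) (τ : V →ₗ[K] K) (a : V)
    (hτa : τ a = 0) (z : Fin (n + 1) → V) (hz : ∀ j, τ (z j) = 0) :
    psiAux n φ τ a z = 0 := by
  rw [psiAux_apply]
  simp [hz, hτa]

lemma phi_zero_of_two (n : ℕ) (φ : V [⋀^Fin (n + 1)]→ₗ[K] V) (v0 : V)
    (z : Fin (n + 1) → V) {i j : Fin (n + 1)} (hij : i ≠ j) {s t : K}
    (hi : z i = s • v0) (hj : z j = t • v0) : φ z = 0 := by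
  have h1 : φ z = s • φ (Function.update z i v0) := by
    conv_lhs => rw [← Function.update_eq_self i z, hi]
    rw [AlternatingMap.map_update_smul]
  have h2 : φ (Function.update z i v0)
      = t • φ (Function.update (Function.update z i v0) j v0) := by
    conv_lhs => rw [← Function.update_eq_self j (Function.update z i v0),
      Function.update_of_ne hij.symm, hj]
    rw [AlternatingMap.map_update_smul]
  have h3 : φ (Function.update (Function.update z i v0) j v0) = 0 := by
    refine φ.map_eq_zero_of_eq _ ?_ hij
    rw [Function.update_of_ne hij, Function.update_self, Function.update_self]
  rw [h1, h2, h3]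
  simp

lemma psiAux_zero_B (n : ℕ) (hn : n ≠ 0) (φ : V [⋀^Fin (n + 1)]→ₗ[K] V)
    (τ : V →ₗ[K] K) (a v0 : V) (μ : K) (ha : a = μ • v0)
    (z : Fin (n + 1) → V) (i0 : Fin (n + 1)) (h0 : τ (z i0) = 0)
    (hz : ∀ j, j ≠ i0 → ∃ s : K, z j = s • v0) :
    psiAux n φ τ a z = 0 := by
  rw [psiAux_apply]
  have hterm : ∀ k, k ≠ i0 →
      φ (Function.update z k (τ (z k) • a)) = (τ v0 * μ) • φ z := by
    intro k hk
    obtain ⟨s, hs⟩ := hz k hk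
    have hτk : τ (z k) = s * τ v0 := by rw [hs, map_smul, smul_eq_mul]
    have hφz : φ z = s • φ (Function.update z k v0) := by
      conv_lhs => rw [← Function.update_eq_self k z, hs]
      rw [AlternatingMap.map_update_smul]
    rw [ha, hτk, smul_smul, AlternatingMap.map_update_smul, hφz, smul_smul]
    congr 1
    ring
  have hsum : (∑ k : Fin (n + 1), φ (Function.update z k (τ (z k) • a)))
      = (n : K) • ((τ v0 * μ) • φ z) := by
    rw [← Finset.add_sum_erase _ _ (Finset.mem_univ i0), h0]
    rw [zero_smul, AlternatingMap.map_update_zero, zero_add]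
    rw [Finset.sum_congr rfl (fun k hk => hterm k (Finset.ne_of_mem_erase hk))]
    rw [Finset.sum_const, Finset.card_erase_of_mem (Finset.mem_univ i0),
      Finset.card_univ, Fintype.card_fin]
    rw [Nat.add_sub_cancel, Nat.cast_smul_eq_nsmul]
  have hτa : τ a = μ * τ v0 := by rw [ha, map_smul, smul_eq_mul]
  rw [hsum, hτa, smul_smul, smul_smul, ← add_smul]
  rcases Nat.lt_or_ge n 2 with hn2 | hn2
  · interval_cases n
    · exact absurd rfl hn
    · have hc : ((-1 : K) ^ (1 + 1) * ((1 : ℕ) : K) * (τ v0 * μ)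
          + (-1 : K) ^ 1 * (μ * τ v0)) = 0 := by push_cast; ring
      rw [hc, zero_smul]
  · have hφz : φ z = 0 := by
      have hcard : 1 < (Finset.univ.erase i0).card := by
        rw [Finset.card_erase_of_mem (Finset.mem_univ i0), Finset.card_univ,
          Fintype.card_fin, Nat.add_sub_cancel]
        omega
      obtain ⟨j1, hj1, j2, hj2, hj12⟩ := Finset.one_lt_card.mp hcard
      obtain ⟨s1, hs1⟩ := hz j1 (Finset.ne_of_mem_erase hj1)
      obtain ⟨s2, hs2⟩ := hz j2 (Finset.ne_of_mem_erase hj2)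
      exact phi_zero_of_two n φ v0 z hj12 hs1 hs2
    rw [hφz, smul_zero]

/-- under the compatibility conditions, inserting a fixed point a of
α_{n+1} into the last slot of φ_τ yields again a Hom-Nambu-Lie algebra with the original
twisting maps, and π_a(φ_τ) is given by the displayed formula. (Here the original
bracket φ is (n+1)-ary with twisting maps α_1,…,α_n.) -/
theorem updown_HomNambuLie (n : ℕ) (φ : V [⋀^Fin (n + 1)]→ₗ[K] V)
    (α : Fin n → V →ₗ[K] V) (hφ : HomNambuJacobi n φ α)
    (τ : V →ₗ[K] K) (htrace : ∀ x : Fin (n + 1) → V, τ (φ x) = 0)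
    (αlast : V →ₗ[K] V)
    (α' : Fin (n + 1) → V →ₗ[K] V) (hα' : α' = Fin.snoc α αlast)
    (hc1 : ∀ (i : Fin (n + 1)) (x y : V),
      τ (α' i x) * τ y = τ x * τ (α' i y))
    (hc2 : ∀ (i j : Fin (n + 1)) (x y : V),
      τ (α' i x) • α' j y =
        τ (α' j y) • α' i x)
    (a : V) (ha : αlast a = a) :
    ∃ ψ : V [⋀^Fin (n + 1)]→ₗ[K] V,
      (∀ x : Fin (n + 1) → V,
        ψ x = (∑ k : Fin (n + 1), (-1 : K) ^ (k.val + 1) • τ (x k) •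
                φ (Fin.snoc (x ∘ k.succAbove) a))
              + (-1 : K) ^ (n + 2) • τ a • φ x) ∧
      HomNambuJacobi n ψ α := by
  classical
  refine ⟨psiAux n φ τ a, fun x => ?_, ?_⟩
  · -- formula
    rw [psiAux_apply]
    congr 1
    · rw [Finset.smul_sum]
      refine Finset.sum_congr rfl fun k _ => ?_
      have key : (-1 : K) ^ (k.val + 1) * (-1 : K) ^ (n + k.val) = (-1 : K) ^ (n + 1) := by
        rw [← pow_add, show k.val + 1 + (n + k.val) = 2 * k.val + (n + 1) by ring,
          pow_add, pow_mul, neg_one_sq, one_pow, one_mul]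
      rw [snoc_perm n φ x k a, AlternatingMap.map_update_smul, smul_smul, smul_smul,
        smul_smul]
      congr 1
      rw [← key]
      ring
    · rw [smul_smul]
      congr 1
      rw [pow_add, neg_one_sq, mul_one]
  · -- Jacobi
    intro x y
    by_cases hn : n = 0
    · subst hn
      rw [Fin.sum_univ_one]
      have hy : (Fin.snoc x (y 0) : Fin 1 → V) = y := by
        funext j
        have hj : j = Fin.last 0 := Fin.ext (by omega)
        subst hj
        rw [Fin.snoc_last]
        exact congrArg y (Fin.ext (by simp))
      congr 1
      funext j
      have hj : j = Fin.last 0 := Fin.ext (by omega)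
      subst hj
      rw [Fin.snoc_last, dif_neg (by simp : ¬ (Fin.last 0).val < (0 : Fin 1).val),
        dif_pos (by simp : (Fin.last 0).val = (0 : Fin 1).val), hy]
    · have hτψ : ∀ w : Fin (n + 1) → V, τ (psiAux n φ τ a w) = 0 :=
        tau_psiAux n φ τ a htrace
      by_cases hA : ∀ (i : Fin (n + 1)) (v : V), τ (α' i v) = 0
      · -- case A
        have hτa : τ a = 0 := by
          have h := hA (Fin.last n) a
          rwa [hα', Fin.snoc_last, ha] at h
        have hAα : ∀ (i : Fin n) (v : V), τ (α i v) = 0 := by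
          intro i v
          have h := hA i.castSucc v
          rwa [hα', Fin.snoc_castSucc] at h
        have hL : psiAux n φ τ a
            (Fin.snoc (fun i => α i (x i)) (psiAux n φ τ a y)) = 0 := by
          apply psiAux_zero_A n φ τ a hτa
          intro j
          refine Fin.lastCases ?_ ?_ j
          · rw [Fin.snoc_last]; exact hτψ y
          · intro i; rw [Fin.snoc_castSucc]; exact hAα i (x i)
        rw [hL]
        symm
        refine Finset.sum_eq_zero fun k _ => ?_
        refine psiAux_zero_A n φ τ a hτa _ fun j => ?_
        by_cases h : j.val < k.val
        · rw [dif_pos h]; exact hAα _ _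
        · rw [dif_neg h]
          by_cases h' : j.val = k.val
          · rw [dif_pos h']; exact hτψ _
          · rw [dif_neg h']; exact hAα _ _
      · -- case B
        push_neg at hA
        obtain ⟨i0, x0, hx0⟩ := hA
        have hmult : ∀ (i : Fin (n + 1)) (v : V), ∃ s : K, α' i v = s • α' i0 x0 := by
          intro i v
          have h := hc2 i i0 v x0
          refine ⟨(τ (α' i0 x0))⁻¹ * τ (α' i v), ?_⟩
          have h2 : (τ (α' i0 x0))⁻¹ • (τ (α' i v) • α' i0 x0)
              = (τ (α' i0 x0))⁻¹ • (τ (α' i0 x0) • α' i v) := by rw [h]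
          rw [smul_smul, smul_smul, inv_mul_cancel₀ hx0, one_smul] at h2
          exact h2.symm
        obtain ⟨μ, hμ⟩ : ∃ μ : K, a = μ • α' i0 x0 := by
          obtain ⟨s, hs⟩ := hmult (Fin.last n) a
          have h3 : α' (Fin.last n) a = a := by rw [hα', Fin.snoc_last, ha]
          exact ⟨s, by rw [← h3]; exact hs⟩
        have hmα : ∀ (i : Fin n) (v : V), ∃ s : K, α i v = s • α' i0 x0 := by
          intro i v
          obtain ⟨s, hs⟩ := hmult i.castSucc v
          have h3 : α i v = α' i.castSucc v := by rw [hα', Fin.snoc_castSucc]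
          exact ⟨s, by rw [h3]; exact hs⟩
        have hL : psiAux n φ τ a
            (Fin.snoc (fun i => α i (x i)) (psiAux n φ τ a y)) = 0 := by
          apply psiAux_zero_B n hn φ τ a _ μ hμ _ (Fin.last n)
          · rw [Fin.snoc_last]; exact hτψ y
          · intro j hj
            obtain ⟨j', rfl⟩ := Fin.exists_castSucc_eq.2 hj
            rw [Fin.snoc_castSucc]
            exact hmα j' (x j')
        rw [hL]
        symm
        refine Finset.sum_eq_zero fun k _ => ?_
        refine psiAux_zero_B n hn φ τ a _ μ hμ _ k ?_ ?_
        · rw [dif_neg (lt_irrefl k.val), dif_pos rfl]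
          exact hτψ _
        · intro j hjk
          by_cases h : j.val < k.val
          · rw [dif_pos h]; exact hmα _ _
          · rw [dif_neg h]
            have h' : j.val ≠ k.val := fun hh => hjk (Fin.ext hh)
            rw [dif_neg h']
            exact hmα _ _
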